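/- Let V(y₁,y₂) = C₃ y₁³ + (λ₂/2) y₂² with C₃ ≠ 0 and λ₂ ≠ 0. Then the origin is not a saddle of V: for every sufficiently small ε > 0, the set {y ∈ B_ε(0) : V(y) < 0} is path-connected, or the set ({y ∈ B_ε(0) : V(y) < 0} ∪ {0}) fails the saddle conditions. -/
import Mathlib


open Metric Set

/-- Communication height between `x` and `y` in the plane. -/
noncomputable def commHeight (V : ℝ × ℝ → ℝ) (x y : ℝ × ℝ) : ℝ :=
  sInf {c : ℝ | ∃ γ : Path x y, ∀ t, V (γ t) ≤ c}

/-- The open valley of `z`. -/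
def openValley (V : ℝ × ℝ → ℝ) (z : ℝ × ℝ) : Set (ℝ × ℝ) :=
  {y | commHeight V y z = V z ∧ V y < V z}

/-- `z` is a saddle of `V` in the valley sense. -/
def IsSaddle (V : ℝ × ℝ → ℝ) (z : ℝ × ℝ) : Prop :=
  ∃ ε > 0, (openValley V z ∩ ball z ε).Nonempty ∧
    ¬ IsPathConnected (openValley V z ∩ ball z ε) ∧
    IsPathConnected ((openValley V z ∪ {z}) ∩ ball z ε)
lemma cube_mono {a b : ℝ} (h : a ≤ b) : a ^ 3 ≤ b ^ 3 := by
  nlinarith [sq_nonneg (a + b), sq_nonneg (a - b), sq_nonneg a, sq_nonneg b]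

lemma between_of_convex {u v t : ℝ} (h0 : 0 ≤ t) (h1 : t ≤ 1) :
    min u v ≤ (1 - t) * u + t * v ∧ (1 - t) * u + t * v ≤ max u v := by
  rcases le_total u v with h | h
  · rw [min_eq_left h, max_eq_right h]; constructor <;> nlinarith
  · rw [min_eq_right h, max_eq_left h]; constructor <;> nlinarith

lemma mul_cube_le {C u v t : ℝ} (h0 : 0 ≤ t) (h1 : t ≤ 1) :
    C * ((1 - t) * u + t * v) ^ 3 ≤ max (C * u ^ 3) (C * v ^ 3) := by
  obtain ⟨hmin, hmax⟩ := between_of_convex (u := u) (v := v) h0 h1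
  rw [le_max_iff]
  rcases le_total u v with hab | hab
  · rw [min_eq_left hab] at hmin; rw [max_eq_right hab] at hmax
    rcases le_total 0 C with hC | hC
    · exact Or.inr (mul_le_mul_of_nonneg_left (cube_mono hmax) hC)
    · exact Or.inl (mul_le_mul_of_nonpos_left (cube_mono hmin) hC)
  · rw [min_eq_right hab] at hmin; rw [max_eq_left hab] at hmax
    rcases le_total 0 C with hC | hC
    · exact Or.inl (mul_le_mul_of_nonneg_left (cube_mono hmax) hC)
    · exact Or.inr (mul_le_mul_of_nonpos_left (cube_mono hmin) hC)

lemma joinedIn_segment {S : Set (ℝ × ℝ)} {x y : ℝ × ℝ}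
    (h : ∀ t : ℝ, 0 ≤ t → t ≤ 1 → (1 - t) • x + t • y ∈ S) : JoinedIn S x y := by
  refine ⟨⟨⟨fun t => (1 - (t : ℝ)) • x + (t : ℝ) • y, by continuity⟩, by simp, by simp⟩, ?_⟩
  intro t
  exact h t t.2.1 t.2.2

lemma mem_ball_prod {z : ℝ × ℝ} {ε : ℝ} :
    z ∈ ball (0 : ℝ × ℝ) ε ↔ |z.1| < ε ∧ |z.2| < ε := by
  simp [mem_ball_zero_iff, Prod.norm_def, Real.norm_eq_abs, max_lt_iff]

lemma abs_convex_lt {u v t ε : ℝ} (h0 : 0 ≤ t) (h1 : t ≤ 1) (hu : |u| < ε) (hv : |v| < ε) :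
    |(1 - t) * u + t * v| < ε := by
  obtain ⟨hmin, hmax⟩ := between_of_convex (u := u) (v := v) h0 h1
  obtain ⟨hu1, hu2⟩ := abs_lt.mp hu
  obtain ⟨hv1, hv2⟩ := abs_lt.mp hv
  refine abs_lt.mpr ⟨?_, ?_⟩
  · have : -ε < min u v := lt_min (by linarith) (by linarith)
    linarith
  · have : max u v < ε := max_lt (by linarith) (by linarith)
    linarith

lemma joined_to_base (C3 lam2 : ℝ) (hlam : lam2 ≠ 0) {ε a : ℝ} (hε : 0 < ε) (ha : |a| < ε)
    (hVa : C3 * a ^ 3 < 0) {y : ℝ × ℝ}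
    (hy : y ∈ ball (0 : ℝ × ℝ) ε) (hVy : C3 * y.1 ^ 3 + (lam2 / 2) * y.2 ^ 2 < 0) :
    JoinedIn ({z : ℝ × ℝ | C3 * z.1 ^ 3 + (lam2 / 2) * z.2 ^ 2 < 0} ∩ ball 0 ε)
      y ((a, 0) : ℝ × ℝ) := by
  obtain ⟨hy1, hy2⟩ := mem_ball_prod.mp hy
  rcases hlam.lt_or_gt with hl | hl
  · -- lam2 < 0 : path y → (a, y.2) → (a, 0)
    have s1 : JoinedIn ({z : ℝ × ℝ | C3 * z.1 ^ 3 + (lam2 / 2) * z.2 ^ 2 < 0} ∩ ball 0 ε)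
        y ((a, y.2) : ℝ × ℝ) := by
      apply joinedIn_segment
      intro t ht0 ht1
      have hz : (1 - t) • y + t • ((a, y.2) : ℝ × ℝ) = ((1 - t) * y.1 + t * a, y.2) := by
        ext <;> simp <;> ring
      rw [hz]
      refine ⟨?_, mem_ball_prod.mpr ⟨abs_convex_lt ht0 ht1 hy1 ha, hy2⟩⟩
      have hc := mul_cube_le (C := C3) (u := y.1) (v := a) ht0 ht1
      have hm : max (C3 * y.1 ^ 3) (C3 * a ^ 3) < -(lam2 / 2 * y.2 ^ 2) :=
        max_lt (by linarith) (by nlinarith [sq_nonneg y.2])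
      simp only [Set.mem_setOf_eq]
      calc C3 * ((1 - t) * y.1 + t * a) ^ 3 + lam2 / 2 * y.2 ^ 2
          ≤ max (C3 * y.1 ^ 3) (C3 * a ^ 3) + lam2 / 2 * y.2 ^ 2 := by linarith
        _ < 0 := by linarith
    have s2 : JoinedIn ({z : ℝ × ℝ | C3 * z.1 ^ 3 + (lam2 / 2) * z.2 ^ 2 < 0} ∩ ball 0 ε)
        ((a, y.2) : ℝ × ℝ) ((a, 0) : ℝ × ℝ) := by
      apply joinedIn_segment
      intro t ht0 ht1
      have hz : (1 - t) • ((a, y.2) : ℝ × ℝ) + t • ((a, 0) : ℝ × ℝ)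
          = (a, (1 - t) * y.2 + t * 0) := by
        ext <;> simp <;> ring
      rw [hz]
      refine ⟨?_, mem_ball_prod.mpr ⟨ha, abs_convex_lt ht0 ht1 hy2 (by simpa using hε)⟩⟩
      simp only [Set.mem_setOf_eq]
      nlinarith [sq_nonneg ((1 - t) * y.2 + t * 0)]
    exact s1.trans s2
  · -- lam2 > 0 : path y → (y.1, 0) → (a, 0)
    have s1 : JoinedIn ({z : ℝ × ℝ | C3 * z.1 ^ 3 + (lam2 / 2) * z.2 ^ 2 < 0} ∩ ball 0 ε)
        y ((y.1, 0) : ℝ × ℝ) := by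
      apply joinedIn_segment
      intro t ht0 ht1
      have hz : (1 - t) • y + t • ((y.1, 0) : ℝ × ℝ) = (y.1, (1 - t) * y.2 + t * 0) := by
        ext <;> simp <;> ring
      rw [hz]
      refine ⟨?_, mem_ball_prod.mpr ⟨hy1, abs_convex_lt ht0 ht1 hy2 (by simpa using hε)⟩⟩
      simp only [Set.mem_setOf_eq]
      have key : ((1 - t) * y.2 + t * 0) ^ 2 ≤ y.2 ^ 2 := by
        nlinarith [mul_nonneg (mul_nonneg ht0 (by linarith : (0:ℝ) ≤ 2 - t)) (sq_nonneg y.2)]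
      nlinarith
    have s2 : JoinedIn ({z : ℝ × ℝ | C3 * z.1 ^ 3 + (lam2 / 2) * z.2 ^ 2 < 0} ∩ ball 0 ε)
        ((y.1, 0) : ℝ × ℝ) ((a, 0) : ℝ × ℝ) := by
      apply joinedIn_segment
      intro t ht0 ht1
      have hz : (1 - t) • ((y.1, 0) : ℝ × ℝ) + t • ((a, 0) : ℝ × ℝ)
          = ((1 - t) * y.1 + t * a, 0) := by
        ext <;> simp
      rw [hz]
      refine ⟨?_, mem_ball_prod.mpr ⟨abs_convex_lt ht0 ht1 hy1 ha, by simpa using hε⟩⟩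
      simp only [Set.mem_setOf_eq]
      have hc := mul_cube_le (C := C3) (u := y.1) (v := a) ht0 ht1
      have hVy1 : C3 * y.1 ^ 3 < 0 := by nlinarith [sq_nonneg y.2]
      have hm : max (C3 * y.1 ^ 3) (C3 * a ^ 3) < 0 := max_lt hVy1 hVa
      nlinarith
    exact s1.trans s2

lemma exists_base (C3 : ℝ) (hC : C3 ≠ 0) {ε : ℝ} (hε : 0 < ε) :
    ∃ a : ℝ, |a| < ε ∧ C3 * a ^ 3 < 0 := by
  rcases hC.lt_or_gt with h | h
  · exact ⟨ε / 2, by rw [abs_of_pos (half_pos hε)]; linarith,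
      by nlinarith [pow_pos (half_pos hε) 3]⟩
  · exact ⟨-(ε / 2), by rw [abs_neg, abs_of_pos (half_pos hε)]; linarith,
      by nlinarith [pow_pos (half_pos hε) 3]⟩

lemma commHeight_zero (C3 lam2 : ℝ) (hC : C3 ≠ 0) (hlam : lam2 ≠ 0) {y : ℝ × ℝ}
    (hVy : C3 * y.1 ^ 3 + (lam2 / 2) * y.2 ^ 2 < 0) :
    commHeight (fun z : ℝ × ℝ => C3 * z.1 ^ 3 + (lam2 / 2) * z.2 ^ 2) y 0 = 0 := by
  set V : ℝ × ℝ → ℝ := fun z => C3 * z.1 ^ 3 + (lam2 / 2) * z.2 ^ 2 with hVdef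
  have hε : (0 : ℝ) < ‖y‖ + 1 := by positivity
  have hy : y ∈ ball (0 : ℝ × ℝ) (‖y‖ + 1) := mem_ball_zero_iff.mpr (by linarith)
  obtain ⟨a, ha, hVa⟩ := exists_base C3 hC hε
  have j1 := joined_to_base C3 lam2 hlam hε ha hVa hy hVy
  have j1' : JoinedIn {z : ℝ × ℝ | V z ≤ 0} y ((a, 0) : ℝ × ℝ) :=
    j1.mono (by intro z hz; simp only [Set.mem_setOf_eq]; exact le_of_lt hz.1)
  have j2 : JoinedIn {z : ℝ × ℝ | V z ≤ 0} ((a, 0) : ℝ × ℝ) 0 := by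
    apply joinedIn_segment
    intro t ht0 ht1
    have hz : (1 - t) • ((a, 0) : ℝ × ℝ) + t • (0 : ℝ × ℝ) = ((1 - t) * a, 0) := by
      ext <;> simp
    rw [hz]
    simp only [Set.mem_setOf_eq, hVdef]
    have hid : C3 * ((1 - t) * a) ^ 3 + lam2 / 2 * (0 : ℝ) ^ 2
        = (1 - t) ^ 3 * (C3 * a ^ 3) := by ring
    rw [hid]
    have h1t : (0 : ℝ) ≤ 1 - t := by linarith
    nlinarith [mul_nonneg (pow_nonneg h1t 3) (by linarith : (0 : ℝ) ≤ -(C3 * a ^ 3))]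
  obtain ⟨γ, hγ⟩ := j1'.trans j2
  have h0mem : (0 : ℝ) ∈ {c : ℝ | ∃ γ : Path y (0 : ℝ × ℝ), ∀ t, V (γ t) ≤ c} := ⟨γ, hγ⟩
  have hlb : ∀ c ∈ {c : ℝ | ∃ γ : Path y (0 : ℝ × ℝ), ∀ t, V (γ t) ≤ c}, (0 : ℝ) ≤ c := by
    rintro c ⟨γ', hγ'⟩
    have h := hγ' 1
    rw [γ'.target] at h
    simpa [hVdef] using h
  exact le_antisymm (csInf_le ⟨0, hlb⟩ h0mem) (le_csInf ⟨0, h0mem⟩ hlb)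

/-- For `V(y₁,y₂) = C₃ y₁³ + (λ₂/2) y₂²` with `C₃ ≠ 0` and `λ₂ ≠ 0`, the origin is not a
saddle of `V` in the valley sense. -/
theorem cubic_origin_not_saddle (C3 lam2 : ℝ) (hC : C3 ≠ 0) (hlam : lam2 ≠ 0) :
    ¬ IsSaddle (fun y : ℝ × ℝ => C3 * y.1 ^ 3 + (lam2 / 2) * y.2 ^ 2) (0 : ℝ × ℝ) := by
  intro hs
  obtain ⟨ε, hε, hne, hnpc, -⟩ := hs
  apply hnpc
  have hov : openValley (fun y : ℝ × ℝ => C3 * y.1 ^ 3 + (lam2 / 2) * y.2 ^ 2) (0 : ℝ × ℝ)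
      = {z : ℝ × ℝ | C3 * z.1 ^ 3 + (lam2 / 2) * z.2 ^ 2 < 0} := by
    ext z
    simp only [openValley, Set.mem_setOf_eq]
    have hV0 : C3 * (0 : ℝ × ℝ).1 ^ 3 + (lam2 / 2) * (0 : ℝ × ℝ).2 ^ 2 = 0 := by simp
    rw [hV0]
    exact ⟨fun h => h.2, fun h => ⟨commHeight_zero C3 lam2 hC hlam h, h⟩⟩
  rw [hov]
  obtain ⟨a, ha, hVa⟩ := exists_base C3 hC hε
  refine ⟨((a, 0) : ℝ × ℝ), ⟨by simpa using hVa, mem_ball_prod.mpr ⟨ha, by simpa using hε⟩⟩, ?_⟩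
  intro z hz
  exact (joined_to_base C3 lam2 hlam hε ha hVa hz.2 hz.1).symm
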